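/- Let φ be a linear operator on a finite-dimensional vector space V and ℓ ∈ ℕ. If B₀ is a basis of ker φ^ℓ and S ⊆ V is a set such that φ^ℓ maps S bijectively onto a basis of ker φ ∩ im φ^ℓ, then B₀ ∪ S is a basis of ker φ^{ℓ+1}. -/

import Mathlib

theorem stmt3 (K V : Type) [Field K] [AddCommGroup V] [Module K V] [FiniteDimensional K V]
    (φ : Module.End K V) (ℓ : ℕ) (B₀ S T : Set V)
    (hB₀li : LinearIndependent K ((↑) : B₀ → V))
    (hB₀span : Submodule.span K B₀ = LinearMap.ker (φ ^ ℓ))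
    (hTli : LinearIndependent K ((↑) : T → V))
    (hTspan : Submodule.span K T = LinearMap.ker φ ⊓ LinearMap.range (φ ^ ℓ))
    (hS : Set.BijOn (⇑(φ ^ ℓ)) S T) :
    LinearIndependent K ((↑) : ↥(B₀ ∪ S) → V) ∧
      Submodule.span K (B₀ ∪ S) = LinearMap.ker (φ ^ (ℓ + 1)) := by
  -- The family `φ^ℓ ∘ (↑) : S → V` is linearly independent (it is `T` reindexed).
  have hcomp : LinearIndependent K ((⇑(φ ^ ℓ)) ∘ ((↑) : S → V)) := by
    have h1 : LinearIndependent K (((↑) : T → V) ∘ (hS.equiv (⇑(φ ^ ℓ)))) :=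
      hTli.comp _ (hS.equiv _).injective
    have h2 : (((↑) : T → V) ∘ (hS.equiv (⇑(φ ^ ℓ)))) = (⇑(φ ^ ℓ)) ∘ ((↑) : S → V) := by
      funext s; rfl
    rwa [h2] at h1
  have hSli : LinearIndependent K ((↑) : S → V) := LinearIndependent.of_comp (φ ^ ℓ) hcomp
  -- Elements of `span S` killed by `φ^ℓ` are zero.
  have hker : ∀ x ∈ Submodule.span K S, (φ ^ ℓ) x = 0 → x = 0 := by
    intro x hx hfx
    rw [← Subtype.range_coe (s := S),
      Finsupp.mem_span_range_iff_exists_finsupp] at hx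
    obtain ⟨c, hc⟩ := hx
    have hlc : Finsupp.linearCombination K ((↑) : S → V) c = x := by
      rw [Finsupp.linearCombination_apply]; exact hc
    have h0 : Finsupp.linearCombination K ((⇑(φ ^ ℓ)) ∘ ((↑) : S → V)) c = 0 := by
      rw [← Finsupp.apply_linearCombination, hlc, hfx]
    have : c = 0 := linearIndependent_iff.1 hcomp c h0
    rw [← hlc, this, map_zero]
  have hdisj : Disjoint (Submodule.span K B₀) (Submodule.span K S) := by
    rw [Submodule.disjoint_def]
    intro x hxB hxS
    rw [hB₀span, LinearMap.mem_ker] at hxB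
    exact hker x hxS hxB
  have hli : LinearIndependent K ((↑) : ↥(B₀ ∪ S) → V) :=
    LinearIndepOn.id_union hB₀li hSli hdisj
  refine ⟨hli, le_antisymm ?_ ?_⟩
  · rw [Submodule.span_le]
    rintro x (hx | hx)
    · have hx' : (φ ^ ℓ) x = 0 := by
        rw [← LinearMap.mem_ker, ← hB₀span]
        exact Submodule.subset_span hx
      simp [SetLike.mem_coe, LinearMap.mem_ker, pow_succ', Module.End.mul_apply, hx']
    · have hx' : (φ ^ ℓ) x ∈ T := hS.mapsTo hx
      have hx'' : φ ((φ ^ ℓ) x) = 0 := by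
        have : (φ ^ ℓ) x ∈ Submodule.span K T := Submodule.subset_span hx'
        rw [hTspan] at this
        exact this.1
      simp [SetLike.mem_coe, LinearMap.mem_ker, pow_succ', Module.End.mul_apply, hx'']
  · intro x hx
    rw [LinearMap.mem_ker, pow_succ', Module.End.mul_apply] at hx
    have hmem : (φ ^ ℓ) x ∈ Submodule.span K T := by
      rw [hTspan]
      exact ⟨hx, ⟨x, rfl⟩⟩
    have hmap : Submodule.span K T = Submodule.map (φ ^ ℓ) (Submodule.span K S) := by
      rw [Submodule.map_span, hS.image_eq]
    rw [hmap] at hmem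
    obtain ⟨y, hyS, hy⟩ := hmem
    have hxy : x - y ∈ Submodule.span K B₀ := by
      rw [hB₀span, LinearMap.mem_ker, map_sub, hy, sub_self]
    have : x = (x - y) + y := by abel
    rw [this, Submodule.span_union]
    exact Submodule.add_mem _ (Submodule.mem_sup_left hxy) (Submodule.mem_sup_right hyS)
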